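/- Let Ω ⊂ ℝⁿ be bounded open with C^{1,γ} boundary and E ⊆ ℝⁿ a bounded measurable set with Per_{s₀}(E;Ω) < ∞ for some s₀ ∈ (0,1). Then lim_{s→0⁺} s·Per_s(E;Ω) = H^{n-1}(S^{n-1})·|E∩Ω|. -/

import Mathlib

open MeasureTheory Filter Metric Set

noncomputable def interL (n : ℕ) (s : ℝ) (A B : Set (EuclideanSpace ℝ (Fin n))) : ENNReal :=
  ∫⁻ x in A, ∫⁻ y in B, ENNReal.ofReal (‖x - y‖ ^ (-((n : ℝ) + s)))

noncomputable def fracPer (n : ℕ) (s : ℝ) (E Ω : Set (EuclideanSpace ℝ (Fin n))) : ENNReal :=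
  interL n s (E ∩ Ω) (Eᶜ ∩ Ω) + interL n s (E ∩ Ω) (Eᶜ ∩ Ωᶜ) + interL n s (E ∩ Ωᶜ) (Eᶜ ∩ Ω)

/-- The (n-1)-dimensional measure of the unit sphere `S^{n-1}`, i.e. `n·ω_n`. -/
noncomputable def sphereArea (n : ℕ) : ℝ :=
  (n : ℝ) * (volume (ball (0 : EuclideanSpace ℝ (Fin n)) 1)).toReal

/-- `Ω` is a domain with `C^{1,γ}` boundary: near each boundary point, `Ω` is the
sublevel set of a `C^1` function with nonvanishing, γ-Hölder continuous differential. -/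
def IsC1HolderDomain (n : ℕ) (Ω : Set (EuclideanSpace ℝ (Fin n))) : Prop :=
  ∃ γ : NNReal, 0 < γ ∧ γ ≤ 1 ∧
    ∀ p ∈ frontier Ω, ∃ (U : Set (EuclideanSpace ℝ (Fin n)))
      (f : EuclideanSpace ℝ (Fin n) → ℝ) (C : NNReal),
      IsOpen U ∧ p ∈ U ∧ ContDiff ℝ 1 f ∧ HolderOnWith C γ (fderiv ℝ f) U ∧
      (∀ x ∈ U, fderiv ℝ f x ≠ 0) ∧ Ω ∩ U = {x ∈ U | f x < 0}

/-- Polar-coordinates formula for the lower Lebesgue integral of a function of the norm. -/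
theorem lintegral_fun_norm_addHaar' {E : Type*} [NormedAddCommGroup E] [NormedSpace ℝ E]
    [MeasurableSpace E] [BorelSpace E]
    [FiniteDimensional ℝ E] [Nontrivial E] (μ : Measure E) [μ.IsAddHaarMeasure]
    (g : ℝ → ENNReal) (hg : Measurable g) :
    ∫⁻ x, g ‖x‖ ∂μ = μ.toSphere univ *
      ∫⁻ r in Ioi (0:ℝ), ENNReal.ofReal (r ^ (Module.finrank ℝ E - 1)) * g r := by
  calc ∫⁻ x, g ‖x‖ ∂μ = ∫⁻ x in ({0}ᶜ : Set E), g ‖x‖ ∂μ := by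
        rw [restrict_compl_singleton]
    _ = ∫⁻ x : ({0}ᶜ : Set E), g ‖(x : E)‖ ∂(μ.comap (↑)) :=
        (lintegral_subtype_comap (measurableSet_singleton 0).compl _).symm
    _ = ∫⁻ p : sphere (0:E) 1 × Ioi (0:ℝ), g p.2
          ∂(μ.toSphere.prod (.volumeIoiPow (Module.finrank ℝ E - 1))) := by
        simpa using μ.measurePreserving_homeomorphUnitSphereProd.lintegral_comp_emb
          (Homeomorph.measurableEmbedding _) (fun p => g p.2)
    _ = ∫⁻ _ : sphere (0:E) 1, (∫⁻ r : Ioi (0:ℝ), g r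
          ∂(Measure.volumeIoiPow (Module.finrank ℝ E - 1))) ∂μ.toSphere := by
        apply MeasureTheory.lintegral_prod
        exact ((hg.comp measurable_subtype_coe).comp measurable_snd).aemeasurable
    _ = μ.toSphere univ * ∫⁻ r : Ioi (0:ℝ), g r
          ∂(Measure.volumeIoiPow (Module.finrank ℝ E - 1)) := by
        rw [lintegral_const, mul_comm]
    _ = _ := by
        congr 1
        rw [Measure.volumeIoiPow, lintegral_withDensity_eq_lintegral_mul _
          (f := fun r : Ioi (0:ℝ) => ENNReal.ofReal (r.1 ^ (Module.finrank ℝ E - 1)))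
          (by fun_prop) (show Measurable fun r : Ioi (0:ℝ) => g ↑r from
            hg.comp measurable_subtype_coe)]
        simpa [Pi.mul_apply] using lintegral_subtype_comap measurableSet_Ioi
          (fun r : ℝ => ENNReal.ofReal (r ^ (Module.finrank ℝ E - 1)) * g r)

/-- The value of the integral of `‖y‖ ^ (-(n+s))` outside a ball. -/
theorem lintegral_compl_ball {n : ℕ} (hn : 1 ≤ n) {R s : ℝ} (hR : 0 < R) (hs : 0 < s) :
    ∫⁻ y in (ball (0 : EuclideanSpace ℝ (Fin n)) R)ᶜ,
        ENNReal.ofReal (‖y‖ ^ (-((n:ℝ) + s))) =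
      ENNReal.ofReal (sphereArea n * (R ^ (-s) / s)) := by
  have hfr : Module.finrank ℝ (EuclideanSpace ℝ (Fin n)) = n := finrank_euclideanSpace_fin
  haveI : Nontrivial (EuclideanSpace ℝ (Fin n)) :=
    Module.nontrivial_of_finrank_pos (R := ℝ)
      (by omega : 0 < Module.finrank ℝ (EuclideanSpace ℝ (Fin n)))
  set g : ℝ → ENNReal := (Ici R).indicator (fun r => ENNReal.ofReal (r ^ (-((n:ℝ) + s)))) with hgdef
  have hgmeas : Measurable g := Measurable.indicator (by fun_prop) measurableSet_Ici
  have h1 : ∫⁻ y in (ball (0 : EuclideanSpace ℝ (Fin n)) R)ᶜ,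
      ENNReal.ofReal (‖y‖ ^ (-((n:ℝ) + s)))
      = ∫⁻ y : EuclideanSpace ℝ (Fin n), g ‖y‖ := by
    rw [← lintegral_indicator measurableSet_ball.compl]
    refine lintegral_congr fun y => ?_
    by_cases h : R ≤ ‖y‖ <;>
      simp [hgdef, indicator_apply, mem_ball, dist_zero_right, not_lt, h]
  have hts : (volume : Measure (EuclideanSpace ℝ (Fin n))).toSphere univ =
      ENNReal.ofReal ((n : ℝ) * (volume (ball (0 : EuclideanSpace ℝ (Fin n)) 1)).toReal) := by
    rw [Measure.toSphere_apply_univ, hfr, ENNReal.ofReal_mul (Nat.cast_nonneg n),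
      ENNReal.ofReal_natCast, ENNReal.ofReal_toReal measure_ball_lt_top.ne]
  have h2 : ∫⁻ r in Ioi (0:ℝ), ENNReal.ofReal (r ^ (n - 1)) * g r
      = ENNReal.ofReal (R ^ (-s) / s) := by
    have hEq : ∀ r ∈ Ioi (0:ℝ), ENNReal.ofReal (r ^ (n-1)) * g r
        = (Ici R).indicator (fun r => ENNReal.ofReal (r ^ (-1 - s))) r := by
      intro r hr
      by_cases hrR : r ∈ Ici R
      · rw [hgdef, indicator_of_mem hrR, indicator_of_mem hrR,
          ← ENNReal.ofReal_mul (pow_nonneg (le_of_lt (mem_Ioi.mp hr)) _)]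
        congr 1
        rw [← Real.rpow_natCast r (n-1), ← Real.rpow_add hr]
        congr 1
        have : ((n - 1 : ℕ) : ℝ) = (n : ℝ) - 1 := by
          push_cast [Nat.cast_sub hn]; ring
        rw [this]; ring
      · rw [hgdef, indicator_of_notMem hrR, indicator_of_notMem hrR, mul_zero]
    have hIci : Ici R ∩ Ioi 0 = Ici R := inter_eq_left.2 fun x hx => lt_of_lt_of_le hR hx
    rw [setLIntegral_congr_fun measurableSet_Ioi hEq,
      lintegral_indicator measurableSet_Ici, Measure.restrict_restrict measurableSet_Ici,
      hIci, ← Measure.restrict_congr_set Ioi_ae_eq_Ici,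
      ← ofReal_integral_eq_lintegral_ofReal
        (integrableOn_Ioi_rpow_of_lt (by linarith) hR)
        (by filter_upwards [ae_restrict_mem measurableSet_Ioi] with r hr
            exact Real.rpow_nonneg (le_of_lt (hR.trans hr)) _),
      integral_Ioi_rpow_of_lt (by linarith) hR,
      show (-1 - s + 1 : ℝ) = -s by ring, neg_div, div_neg, neg_neg]
  rw [h1, lintegral_fun_norm_addHaar' volume g hgmeas, hfr, hts, h2,
    ← ENNReal.ofReal_mul (by positivity)]
  rfl

/-- Translation invariance of the kernel integral outside a ball. -/
theorem lintegral_compl_ball_sub {n : ℕ} (x : EuclideanSpace ℝ (Fin n)) (R c : ℝ) :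
    ∫⁻ y in (ball x R)ᶜ, ENNReal.ofReal (‖x - y‖ ^ c) =
      ∫⁻ y in (ball (0 : EuclideanSpace ℝ (Fin n)) R)ᶜ, ENNReal.ofReal (‖y‖ ^ c) := by
  have mp : MeasurePreserving (fun y : EuclideanSpace ℝ (Fin n) => x - y) volume volume :=
    Measure.measurePreserving_sub_left volume x
  have hemb : MeasurableEmbedding (fun y : EuclideanSpace ℝ (Fin n) => x - y) :=
    (Homeomorph.mk (Equiv.subLeft x)
      (by exact
        ((continuous_const.sub continuous_id) :
          Continuous fun y : EuclideanSpace ℝ (Fin n) => x - y))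
      (by exact
        ((continuous_neg.add continuous_const) :
          Continuous fun y : EuclideanSpace ℝ (Fin n) => -y + x))).measurableEmbedding
  have key := mp.setLIntegral_comp_preimage_emb hemb
    (fun z => ENNReal.ofReal (‖z‖ ^ c)) ((ball (0 : EuclideanSpace ℝ (Fin n)) R)ᶜ)
  have hpre : (fun y : EuclideanSpace ℝ (Fin n) => x - y) ⁻¹'
      (ball (0 : EuclideanSpace ℝ (Fin n)) R)ᶜ = (ball x R)ᶜ := by
    ext y
    simp [mem_ball, dist_zero_right, dist_eq_norm, norm_sub_rev x y]
  rw [hpre] at key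
  exact key


/-- The fractional kernel. -/
noncomputable def kerK (n : ℕ) (t : ℝ) (x y : EuclideanSpace ℝ (Fin n)) : ENNReal :=
  ENNReal.ofReal (‖x - y‖ ^ (-((n : ℝ) + t)))

/-- The near part of the kernel. -/
noncomputable def kerN (n : ℕ) (t : ℝ) (x y : EuclideanSpace ℝ (Fin n)) : ENNReal :=
  if ‖x - y‖ < 1 then kerK n t x y else 0

/-- The far part of the kernel. -/
noncomputable def kerF (n : ℕ) (t : ℝ) (x y : EuclideanSpace ℝ (Fin n)) : ENNReal :=
  if ‖x - y‖ < 1 then 0 else kerK n t x y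

theorem interL_eq (n : ℕ) (t : ℝ) (A B : Set (EuclideanSpace ℝ (Fin n))) :
    interL n t A B = ∫⁻ x in A, ∫⁻ y in B, kerK n t x y := rfl

theorem kerK_meas (n : ℕ) (t : ℝ) :
    Measurable fun p : EuclideanSpace ℝ (Fin n) × EuclideanSpace ℝ (Fin n) =>
      kerK n t p.1 p.2 := by
  unfold kerK; fun_prop

theorem kerCond_meas (n : ℕ) :
    MeasurableSet {p : EuclideanSpace ℝ (Fin n) × EuclideanSpace ℝ (Fin n) |
      ‖p.1 - p.2‖ < 1} :=
  measurableSet_lt (by fun_prop) measurable_const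

theorem kerN_meas (n : ℕ) (t : ℝ) :
    Measurable fun p : EuclideanSpace ℝ (Fin n) × EuclideanSpace ℝ (Fin n) =>
      kerN n t p.1 p.2 :=
  Measurable.ite (kerCond_meas n) (kerK_meas n t) measurable_const

theorem kerF_meas (n : ℕ) (t : ℝ) :
    Measurable fun p : EuclideanSpace ℝ (Fin n) × EuclideanSpace ℝ (Fin n) =>
      kerF n t p.1 p.2 :=
  Measurable.ite (kerCond_meas n) measurable_const (kerK_meas n t)

theorem meas_inner {n : ℕ}
    {F : EuclideanSpace ℝ (Fin n) → EuclideanSpace ℝ (Fin n) → ENNReal}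
    (hF : Measurable fun p : EuclideanSpace ℝ (Fin n) × EuclideanSpace ℝ (Fin n) =>
      F p.1 p.2) (B : Set (EuclideanSpace ℝ (Fin n))) :
    Measurable fun x => ∫⁻ y in B, F x y :=
  Measurable.lintegral_prod_right' (f := fun p => F p.1 p.2) hF

theorem kerN_meas_left (n : ℕ) (t : ℝ) (x : EuclideanSpace ℝ (Fin n)) :
    Measurable fun y => kerN n t x y := by
  unfold kerN
  exact Measurable.ite (measurableSet_lt (by fun_prop) measurable_const)
    (by unfold kerK; fun_prop) measurable_const

/-- Value of the inner far integral. -/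
theorem kerK_inner_value {n : ℕ} (hn : 1 ≤ n) {t : ℝ} (ht : 0 < t)
    (x : EuclideanSpace ℝ (Fin n)) {R : ℝ} (hR : 0 < R) :
    ∫⁻ y in (ball x R)ᶜ, kerK n t x y = ENNReal.ofReal (sphereArea n * (R ^ (-t) / t)) := by
  unfold kerK
  rw [lintegral_compl_ball_sub x R _, lintegral_compl_ball hn hR ht]

set_option maxHeartbeats 1000000 in
theorem stmt_12 {n : ℕ} (Ω E : Set (EuclideanSpace ℝ (Fin n)))
    (hΩo : IsOpen Ω) (hΩb : Bornology.IsBounded Ω) (hΩreg : IsC1HolderDomain n Ω)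
    (hE : MeasurableSet E) (hEb : Bornology.IsBounded E)
    (s₀ : ℝ) (hs₀ : s₀ ∈ Set.Ioo (0 : ℝ) 1) (hfin : fracPer n s₀ E Ω ≠ ⊤) :
    Tendsto (fun s : ℝ => s * (fracPer n s E Ω).toReal)
      (nhdsWithin 0 (Set.Ioi 0)) (nhds (sphereArea n * (volume (E ∩ Ω)).toReal)) := by
  classical
  rcases Nat.eq_zero_or_pos n with hn0 | hnpos
  · subst hn0
    haveI hsub : Subsingleton (EuclideanSpace ℝ (Fin 0)) :=
      ⟨fun a b => PiLp.ext fun i => i.elim0⟩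
    have hzero : ∀ s ∈ Ioi (0:ℝ), s * (fracPer 0 s E Ω).toReal = 0 := by
      intro s hs
      have hI : ∀ A B : Set (EuclideanSpace ℝ (Fin 0)), interL 0 s A B = 0 := by
        intro A B
        have h0 : ∀ x y : EuclideanSpace ℝ (Fin 0),
            ENNReal.ofReal (‖x - y‖ ^ (-(((0:ℕ):ℝ) + s))) = 0 := by
          intro x y
          have hxy : x - y = 0 := Subsingleton.elim _ _
          rw [hxy, norm_zero, Real.zero_rpow (by simp; linarith [mem_Ioi.mp hs])]
          simp
        simp only [interL, h0, lintegral_zero, lintegral_const, zero_mul]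
      simp [fracPer, hI]
    have hRHS : sphereArea 0 * (volume (E ∩ Ω)).toReal = 0 := by simp [sphereArea]
    rw [hRHS]
    refine Tendsto.congr' ?_ tendsto_const_nhds
    filter_upwards [self_mem_nhdsWithin] with s hs
    exact (hzero s hs).symm
  have hn : 1 ≤ n := hnpos
  set c : ℝ := sphereArea n with hc
  have hc0 : 0 ≤ c := mul_nonneg (Nat.cast_nonneg n) ENNReal.toReal_nonneg
  obtain ⟨r₁, hEr₁⟩ := hEb.subset_ball (0 : EuclideanSpace ℝ (Fin n))
  set r : ℝ := max r₁ 1 with hrdef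
  have hEr : E ⊆ ball 0 r := hEr₁.trans (ball_subset_ball (le_max_left _ _))
  have hr0 : (0:ℝ) < r := lt_of_lt_of_le one_pos (le_max_right _ _)
  obtain ⟨r₂, hΩr₂⟩ := hΩb.subset_ball (0 : EuclideanSpace ℝ (Fin n))
  have hEΩlt : volume (E ∩ Ω) < ⊤ :=
    lt_of_le_of_lt (measure_mono fun x hx => hEr hx.1) measure_ball_lt_top
  have hEΩclt : volume (E ∩ Ωᶜ) < ⊤ :=
    lt_of_le_of_lt (measure_mono fun x hx => hEr hx.1) measure_ball_lt_top
  have hEcΩlt : volume (Eᶜ ∩ Ω) < ⊤ :=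
    lt_of_le_of_lt (measure_mono fun x hx => hΩr₂ hx.2) measure_ball_lt_top
  set R₀ : ℝ := 2 * r + 1 with hR₀def
  have hR₀1 : 1 ≤ R₀ := by rw [hR₀def]; linarith
  have hR₀0 : 0 < R₀ := lt_of_lt_of_le one_pos hR₀1
  have hball : ∀ x ∈ E, (ball x R₀)ᶜ ⊆ Eᶜ := by
    intro x hx z hz hzE
    have h1 : ‖x‖ < r := by simpa [mem_ball, dist_zero_right] using hEr hx
    have h2 : ‖z‖ < r := by simpa [mem_ball, dist_zero_right] using hEr hzE
    have h3 : R₀ ≤ dist z x := by simpa [mem_compl_iff, mem_ball, not_lt] using hz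
    have h4 : dist z x ≤ ‖z‖ + ‖x‖ := by
      rw [dist_eq_norm]
      exact (norm_sub_le _ _).trans (by simp)
    rw [hR₀def] at h3
    linarith
  -- pointwise kernel estimates
  have hKmono : ∀ {t : ℝ}, 0 < t → t ≤ s₀ → ∀ x y : EuclideanSpace ℝ (Fin n),
      ‖x - y‖ < 1 → kerK n t x y ≤ kerK n s₀ x y := by
    intro t ht hts x y hxy
    unfold kerK
    apply ENNReal.ofReal_le_ofReal
    rcases eq_or_lt_of_le (norm_nonneg (x - y)) with h0 | h0
    · have hne1 : -((n:ℝ) + t) ≠ 0 := by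
        have : (0:ℝ) ≤ n := Nat.cast_nonneg n
        intro h; nlinarith [neg_eq_zero.mp h]
      have hne2 : -((n:ℝ) + s₀) ≠ 0 := by
        have : (0:ℝ) ≤ n := Nat.cast_nonneg n
        intro h; nlinarith [neg_eq_zero.mp h, hs₀.1]
      rw [← h0, Real.zero_rpow hne1, Real.zero_rpow hne2]
    · exact Real.rpow_le_rpow_of_exponent_ge h0 (le_of_lt hxy) (by linarith)
  have hKle1 : ∀ {t : ℝ}, 0 < t → ∀ x y : EuclideanSpace ℝ (Fin n),
      ¬ ‖x - y‖ < 1 → kerK n t x y ≤ 1 := by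
    intro t ht x y h
    unfold kerK
    calc ENNReal.ofReal (‖x - y‖ ^ (-((n:ℝ) + t))) ≤ ENNReal.ofReal 1 :=
        ENNReal.ofReal_le_ofReal (Real.rpow_le_one_of_one_le_of_nonpos (not_lt.1 h)
          (by have : (0:ℝ) ≤ n := Nat.cast_nonneg n; linarith))
      _ = 1 := ENNReal.ofReal_one
  have hKsplit : ∀ t : ℝ, ∀ x y : EuclideanSpace ℝ (Fin n),
      kerK n t x y = kerN n t x y + kerF n t x y := by
    intro t x y
    unfold kerN kerF
    split_ifs <;> simp
  -- decomposition of fracPer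
  have hfp : ∀ t : ℝ, fracPer n t E Ω = interL n t (E ∩ Ω) (Eᶜ ∩ Ω) +
      interL n t (E ∩ Ω) (Eᶜ ∩ Ωᶜ) + interL n t (E ∩ Ωᶜ) (Eᶜ ∩ Ω) := fun t => rfl
  have hsplit2 : ∀ t : ℝ, interL n t (E ∩ Ω) (Eᶜ ∩ Ω) + interL n t (E ∩ Ω) (Eᶜ ∩ Ωᶜ)
      = ∫⁻ x in E ∩ Ω, ∫⁻ y in Eᶜ, kerK n t x y := by
    intro t
    rw [interL_eq, interL_eq, ← lintegral_add_left (meas_inner (kerK_meas n t) _)]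
    refine lintegral_congr fun x => ?_
    rw [← lintegral_union (hE.compl.inter hΩo.measurableSet.compl)
        (disjoint_compl_right.mono inter_subset_right inter_subset_right),
      ← inter_union_distrib_left, union_compl_self, inter_univ]
  have hsplit3 : ∀ t : ℝ, (∫⁻ x in E ∩ Ω, ∫⁻ y in Eᶜ, kerK n t x y)
      = (∫⁻ x in E ∩ Ω, ∫⁻ y in Eᶜ, kerN n t x y)
        + (∫⁻ x in E ∩ Ω, ∫⁻ y in Eᶜ, kerF n t x y) := by
    intro t
    rw [← lintegral_add_left (meas_inner (kerN_meas n t) _)]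
    refine lintegral_congr fun x => ?_
    rw [← lintegral_add_left (kerN_meas_left n t x)]
    exact lintegral_congr fun y => hKsplit t x y
  set F : ℝ → ENNReal := fun t => ∫⁻ x in E ∩ Ω, ∫⁻ y in Eᶜ, kerF n t x y with hF
  set N : ℝ → ENNReal := fun t => ∫⁻ x in E ∩ Ω, ∫⁻ y in Eᶜ, kerN n t x y with hN
  set T : ℝ → ENNReal := fun t => interL n t (E ∩ Ωᶜ) (Eᶜ ∩ Ω) with hT
  have hdecomp : ∀ t : ℝ, fracPer n t E Ω = F t + (N t + T t) := by
    intro t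
    rw [hfp t, hsplit2 t, hsplit3 t]
    simp only [hF, hN, hT]
    ring
  -- far bounds
  have hFup : ∀ t : ℝ, 0 < t → F t ≤ volume (E ∩ Ω) * ENNReal.ofReal (c * (1 / t)) := by
    intro t ht
    have hx : ∀ x : EuclideanSpace ℝ (Fin n),
        ∫⁻ y in Eᶜ, kerF n t x y ≤ ENNReal.ofReal (c * (1 / t)) := by
      intro x
      calc ∫⁻ y in Eᶜ, kerF n t x y ≤ ∫⁻ y, kerF n t x y :=
            setLIntegral_le_lintegral _ _
        _ = ∫⁻ y in (ball x 1)ᶜ, kerK n t x y := by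
            rw [← lintegral_indicator measurableSet_ball.compl]
            refine lintegral_congr fun y => ?_
            by_cases h : ‖x - y‖ < 1
            · have hy : y ∈ ball x 1 := by
                simpa [mem_ball, dist_eq_norm, norm_sub_rev x y] using h
              simp [kerF, h, indicator_apply, hy]
            · have hy : y ∉ ball x 1 := by
                simpa [mem_ball, dist_eq_norm, norm_sub_rev x y] using h
              simp [kerF, h, indicator_apply, hy]
        _ = ENNReal.ofReal (c * ((1:ℝ) ^ (-t) / t)) := kerK_inner_value hn ht x one_pos
        _ = ENNReal.ofReal (c * (1 / t)) := by rw [Real.one_rpow]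
    calc F t ≤ ∫⁻ _ in E ∩ Ω, ENNReal.ofReal (c * (1 / t)) := by
          simp only [hF]; exact lintegral_mono fun x => hx x
      _ = volume (E ∩ Ω) * ENNReal.ofReal (c * (1 / t)) := by
          rw [setLIntegral_const, mul_comm]
  have hFlo : ∀ t : ℝ, 0 < t →
      volume (E ∩ Ω) * ENNReal.ofReal (c * (R₀ ^ (-t) / t)) ≤ F t := by
    intro t ht
    have hx : ∀ x ∈ E ∩ Ω,
        ENNReal.ofReal (c * (R₀ ^ (-t) / t)) ≤ ∫⁻ y in Eᶜ, kerF n t x y := by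
      intro x hxEΩ
      calc ENNReal.ofReal (c * (R₀ ^ (-t) / t))
          = ∫⁻ y in (ball x R₀)ᶜ, kerK n t x y := (kerK_inner_value hn ht x hR₀0).symm
        _ = ∫⁻ y in (ball x R₀)ᶜ, kerF n t x y := by
            refine setLIntegral_congr_fun measurableSet_ball.compl ?_
            intro y hy
            have h3 : R₀ ≤ ‖x - y‖ := by
              have := hy
              simp only [mem_compl_iff, mem_ball, not_lt, dist_eq_norm] at this
              calc R₀ ≤ ‖y - x‖ := this
                _ = ‖x - y‖ := norm_sub_rev y x
            have hnl : ¬ ‖x - y‖ < 1 := not_lt.2 (le_trans hR₀1 h3)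
            simp [kerF, hnl]
        _ ≤ ∫⁻ y in Eᶜ, kerF n t x y := lintegral_mono_set (hball x hxEΩ.1)
    calc volume (E ∩ Ω) * ENNReal.ofReal (c * (R₀ ^ (-t) / t))
        = ∫⁻ _ in E ∩ Ω, ENNReal.ofReal (c * (R₀ ^ (-t) / t)) := by
          rw [setLIntegral_const, mul_comm]
      _ ≤ F t := by
          simp only [hF]
          exact setLIntegral_mono (meas_inner (kerF_meas n t) _) hx
  -- near and third-term bounds
  have hNle : ∀ t : ℝ, 0 < t → t ≤ s₀ → N t ≤ fracPer n s₀ E Ω := by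
    intro t ht hts
    have h1 : N t ≤ ∫⁻ x in E ∩ Ω, ∫⁻ y in Eᶜ, kerK n s₀ x y := by
      simp only [hN]
      refine lintegral_mono fun x => lintegral_mono fun y => ?_
      by_cases h : ‖x - y‖ < 1
      · calc kerN n t x y = kerK n t x y := by simp [kerN, h]
          _ ≤ kerK n s₀ x y := hKmono ht hts x y h
      · simp [kerN, h]
    rw [← hsplit2 s₀] at h1
    refine h1.trans ?_
    rw [hfp s₀]
    exact le_add_right le_rfl
  have hTle : ∀ t : ℝ, 0 < t → t ≤ s₀ →
      T t ≤ fracPer n s₀ E Ω + volume (Eᶜ ∩ Ω) * volume (E ∩ Ωᶜ) := by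
    intro t ht hts
    have hpt : ∀ x y : EuclideanSpace ℝ (Fin n), kerK n t x y ≤ kerK n s₀ x y + 1 := by
      intro x y
      by_cases h : ‖x - y‖ < 1
      · exact le_trans (hKmono ht hts x y h) le_self_add
      · exact le_trans (hKle1 ht x y h) le_add_self
    have h1 : T t ≤ ∫⁻ x in E ∩ Ωᶜ, ((∫⁻ y in Eᶜ ∩ Ω, kerK n s₀ x y) + volume (Eᶜ ∩ Ω)) := by
      simp only [hT, interL_eq]
      refine lintegral_mono fun x => ?_
      calc ∫⁻ y in Eᶜ ∩ Ω, kerK n t x y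
          ≤ ∫⁻ y in Eᶜ ∩ Ω, (kerK n s₀ x y + 1) := lintegral_mono fun y => hpt x y
        _ = (∫⁻ y in Eᶜ ∩ Ω, kerK n s₀ x y) + volume (Eᶜ ∩ Ω) := by
            rw [lintegral_add_right _ measurable_const, setLIntegral_one]
    have h2 : ∫⁻ x in E ∩ Ωᶜ, ((∫⁻ y in Eᶜ ∩ Ω, kerK n s₀ x y) + volume (Eᶜ ∩ Ω))
        = interL n s₀ (E ∩ Ωᶜ) (Eᶜ ∩ Ω) + volume (Eᶜ ∩ Ω) * volume (E ∩ Ωᶜ) := by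
      rw [lintegral_add_right _ measurable_const, setLIntegral_const, interL_eq]
    refine (h1.trans_eq h2).trans (add_le_add_left ?_ _)
    rw [hfp s₀]
    exact le_add_self
  set C : ENNReal := fracPer n s₀ E Ω +
    (fracPer n s₀ E Ω + volume (Eᶜ ∩ Ω) * volume (E ∩ Ωᶜ)) with hCdef
  have hClt : C < ⊤ := by
    rw [hCdef, lt_top_iff_ne_top]
    exact ENNReal.add_ne_top.2 ⟨hfin, ENNReal.add_ne_top.2
      ⟨hfin, (ENNReal.mul_lt_top hEcΩlt hEΩclt).ne⟩⟩
  have hrest : ∀ t : ℝ, 0 < t → t ≤ s₀ → N t + T t ≤ C := fun t ht hts =>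
    add_le_add (hNle t ht hts) (hTle t ht hts)
  have hFne : ∀ t : ℝ, 0 < t → F t ≠ ⊤ := fun t ht =>
    (lt_of_le_of_lt (hFup t ht) (ENNReal.mul_lt_top hEΩlt ENNReal.ofReal_lt_top)).ne
  -- the eventual identity
  have hev : (fun t : ℝ => t * (F t).toReal + t * (N t + T t).toReal)
      =ᶠ[nhdsWithin 0 (Set.Ioi 0)] fun t : ℝ => t * (fracPer n t E Ω).toReal := by
    filter_upwards [Ioc_mem_nhdsGT hs₀.1] with t ht
    rw [hdecomp t, ENNReal.toReal_add (hFne t ht.1)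
      (lt_of_le_of_lt (hrest t ht.1 ht.2) hClt).ne]
    ring
  -- limit of the far part
  set m : ℝ := (volume (E ∩ Ω)).toReal with hm
  have hA : Tendsto (fun t : ℝ => t * (F t).toReal)
      (nhdsWithin 0 (Set.Ioi 0)) (nhds (c * m)) := by
    have hup : ∀ᶠ t in nhdsWithin 0 (Set.Ioi 0), t * (F t).toReal ≤ c * m := by
      filter_upwards [Ioc_mem_nhdsGT hs₀.1] with t ht
      have h1 : (F t).toReal ≤ (volume (E ∩ Ω) * ENNReal.ofReal (c * (1 / t))).toReal :=
        ENNReal.toReal_mono (ENNReal.mul_ne_top hEΩlt.ne ENNReal.ofReal_ne_top) (hFup t ht.1)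
      rw [ENNReal.toReal_mul, ENNReal.toReal_ofReal
        (mul_nonneg hc0 (one_div_nonneg.mpr ht.1.le))] at h1
      calc t * (F t).toReal ≤ t * (m * (c * (1 / t))) :=
          mul_le_mul_of_nonneg_left h1 ht.1.le
        _ = c * m := by field_simp [ht.1.ne']
    have hlo : ∀ᶠ t in nhdsWithin 0 (Set.Ioi 0),
        c * R₀ ^ (-t) * m ≤ t * (F t).toReal := by
      filter_upwards [Ioc_mem_nhdsGT hs₀.1] with t ht
      have h1 : (volume (E ∩ Ω) * ENNReal.ofReal (c * (R₀ ^ (-t) / t))).toReal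
          ≤ (F t).toReal := ENNReal.toReal_mono (hFne t ht.1) (hFlo t ht.1)
      rw [ENNReal.toReal_mul, ENNReal.toReal_ofReal
        (mul_nonneg hc0 (div_nonneg (Real.rpow_nonneg hR₀0.le _) ht.1.le))] at h1
      calc c * R₀ ^ (-t) * m = t * (m * (c * (R₀ ^ (-t) / t))) := by
            field_simp [ht.1.ne']
        _ ≤ t * (F t).toReal := mul_le_mul_of_nonneg_left h1 ht.1.le
    have hlim : Tendsto (fun t : ℝ => c * R₀ ^ (-t) * m)
        (nhdsWithin 0 (Set.Ioi 0)) (nhds (c * m)) := by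
      have h2 : Tendsto (fun t : ℝ => R₀ ^ (-t)) (nhds 0) (nhds 1) := by
        have h3 : ContinuousAt (fun u : ℝ => R₀ ^ u) (-0) :=
          Real.continuousAt_const_rpow hR₀0.ne'
        have h4 := h3.tendsto.comp (continuous_neg.tendsto (0:ℝ))
        simpa [Real.rpow_zero, Function.comp_def] using h4
      have h5 : Tendsto (fun t : ℝ => c * R₀ ^ (-t) * m) (nhds 0) (nhds (c * 1 * m)) :=
        (tendsto_const_nhds.mul h2).mul tendsto_const_nhds
      simpa using h5.mono_left nhdsWithin_le_nhds
    exact tendsto_of_tendsto_of_tendsto_of_le_of_le' hlim tendsto_const_nhds hlo hup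
  -- limit of the remainder
  have hB : Tendsto (fun t : ℝ => t * (N t + T t).toReal)
      (nhdsWithin 0 (Set.Ioi 0)) (nhds 0) := by
    have hup : ∀ᶠ t in nhdsWithin 0 (Set.Ioi 0),
        t * (N t + T t).toReal ≤ t * C.toReal := by
      filter_upwards [Ioc_mem_nhdsGT hs₀.1] with t ht
      exact mul_le_mul_of_nonneg_left
        (ENNReal.toReal_mono hClt.ne (hrest t ht.1 ht.2)) ht.1.le
    have hlo : ∀ᶠ t in nhdsWithin 0 (Set.Ioi 0), 0 ≤ t * (N t + T t).toReal := by
      filter_upwards [self_mem_nhdsWithin] with t ht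
      exact mul_nonneg (le_of_lt ht) ENNReal.toReal_nonneg
    have hlim : Tendsto (fun t : ℝ => t * C.toReal)
        (nhdsWithin 0 (Set.Ioi 0)) (nhds 0) := by
      have h5 : Tendsto (fun t : ℝ => t * C.toReal) (nhds 0) (nhds (0 * C.toReal)) :=
        (continuous_id.mul continuous_const).tendsto 0
      simpa using h5.mono_left nhdsWithin_le_nhds
    exact tendsto_of_tendsto_of_tendsto_of_le_of_le' tendsto_const_nhds hlim hlo hup
  have hAB := hA.add hB
  rw [add_zero] at hAB
  exact Tendsto.congr' hev hAB
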